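/- Let p be an odd prime, k ∈ F_p with k ≠ 0, and let f be a monic irreducible polynomial of degree n over F_p with f ∉ {x, x+1, x-1}. Let α ∈ F_{p^n} be a root of f. If the set of roots of f (in F_{p^n}) is closed under inversion, then n is even and the minimal polynomial of k·(α + α⁻¹) over F_p has degree n/2. -/

import Mathlib

open Polynomial IntermediateField Module

set_option maxHeartbeats 1000000 in
set_option synthInstance.maxHeartbeats 400000 in
private lemma exists_aut_aux {K L : Type*} [Field K] [Field L] [Algebra K L]
    [FiniteDimensional K L] {α β : L} (hint : IsIntegral K α)
    (htop : IntermediateField.adjoin K {α} = ⊤)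
    (hβ : Polynomial.aeval β (minpoly K α) = 0) :
    ∃ σ : L →ₐ[K] L, σ α = β := by
  refine ⟨((AdjoinRoot.liftAlgHom _ (Algebra.ofId K L) β
      (by rw [Algebra.toRingHom_ofId, ← aeval_def]; exact hβ)).comp
      (IntermediateField.adjoinRootEquivAdjoin K hint).symm.toAlgHom).comp
      ((IntermediateField.equivOfEq htop.symm).toAlgHom.comp
        IntermediateField.topEquiv.symm.toAlgHom), ?_⟩
  have h1 : (IntermediateField.equivOfEq htop.symm)
      (IntermediateField.topEquiv.symm α) = AdjoinSimple.gen K α := by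
    apply Subtype.ext
    simp
  simp only [AlgHom.comp_apply, AlgEquiv.toAlgHom_eq_coe, AlgHom.coe_coe, h1,
    IntermediateField.adjoinRootEquivAdjoin_symm_apply_gen]
  simp only [AlgEquiv.coe_algHom, h1, IntermediateField.adjoinRootEquivAdjoin_symm_apply_gen]
  exact AdjoinRoot.liftAlgHom_root _ (Algebra.ofId K L) β _

set_option maxHeartbeats 1000000 in
set_option synthInstance.maxHeartbeats 400000 in
theorem minpoly_theta_natDegree_of_inverse_closed (p n : ℕ) [Fact p.Prime]
    (hodd : Odd p) (k : ZMod p) (hk : k ≠ 0)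
    (f : Polynomial (ZMod p)) (hmonic : f.Monic) (hirr : Irreducible f)
    (hdeg : f.natDegree = n)
    (hne1 : f ≠ Polynomial.X) (hne2 : f ≠ Polynomial.X + 1)
    (hne3 : f ≠ Polynomial.X - 1)
    (α : GaloisField p n) (hroot : Polynomial.aeval α f = 0)
    (hinv : ∀ γ : GaloisField p n,
      Polynomial.aeval γ f = 0 → Polynomial.aeval γ⁻¹ f = 0) :
    Even n ∧
      (minpoly (ZMod p)
        (algebraMap (ZMod p) (GaloisField p n) k * (α + α⁻¹))).natDegree = n / 2 := by
  classical
  have hfm : f = minpoly (ZMod p) α :=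
    minpoly.eq_of_irreducible_of_monic hirr hroot hmonic
  have hint : IsIntegral (ZMod p) α := IsIntegral.of_finite _ _
  have hα0 : α ≠ 0 := by
    rintro rfl
    exact hne1 (hfm.trans (minpoly.zero _ _))
  have hα1 : α ≠ 1 := by
    rintro rfl
    apply hne3
    rw [hfm, minpoly.one]
  have hαm1 : α ≠ -1 := by
    rintro rfl
    apply hne2
    have h1 : (-1 : GaloisField p n) = algebraMap (ZMod p) (GaloisField p n) (-1) := by simp
    rw [hfm, h1, minpoly.eq_X_sub_C, map_neg, map_one, sub_neg_eq_add]
  have hα2 : α * α ≠ 1 := by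
    intro h
    have h0 : (α - 1) * (α + 1) = 0 := by linear_combination h
    rcases mul_eq_zero.1 h0 with h1 | h1
    · exact hα1 (sub_eq_zero.1 h1)
    · exact hαm1 (eq_neg_of_add_eq_zero_left h1)
  have hβ : Polynomial.aeval α⁻¹ f = 0 := hinv α hroot
  have hn : n ≠ 0 := by
    have := minpoly.natDegree_pos hint
    rw [← hfm, hdeg] at this
    omega
  have hfr : finrank (ZMod p) (GaloisField p n) = n := GaloisField.finrank p hn
  have hfrα : finrank (ZMod p) (ZMod p)⟮α⟯ = n := by
    rw [IntermediateField.adjoin.finrank hint, ← hfm, hdeg]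
  have htopα : (ZMod p)⟮α⟯ = ⊤ := by
    have h1 : finrank (ZMod p)
        (Subalgebra.toSubmodule ((ZMod p)⟮α⟯).toSubalgebra) =
        finrank (ZMod p) (GaloisField p n) := by
      rw [hfr]; exact hfrα
    have h2 := Submodule.eq_top_of_finrank_eq h1
    apply IntermediateField.toSubalgebra_injective
    apply Subalgebra.toSubmodule_injective
    simpa using h2
  obtain ⟨σ, hσα⟩ := exists_aut_aux hint htopα (by rwa [← hfm])
  set θ : GaloisField p n := algebraMap (ZMod p) (GaloisField p n) k * (α + α⁻¹) with hθ
  have hσθ : σ θ = θ := by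
    rw [hθ, map_mul, map_add, hσα, map_inv₀, hσα, inv_inv, AlgHom.commutes, add_comm]
  have hθT : θ ∈ (ZMod p)⟮θ⟯ := IntermediateField.mem_adjoin_simple_self (ZMod p) θ
  have hck : algebraMap (ZMod p) (GaloisField p n) k ≠ 0 :=
    (map_ne_zero_iff _ (algebraMap (ZMod p) (GaloisField p n)).injective).2 hk
  have hθ₀T : α + α⁻¹ ∈ (ZMod p)⟮θ⟯ := by
    have h1 : algebraMap (ZMod p) (GaloisField p n) k⁻¹ ∈ (ZMod p)⟮θ⟯ :=
      IntermediateField.algebraMap_mem _ _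
    have h2 := mul_mem h1 hθT
    have h3 : algebraMap (ZMod p) (GaloisField p n) k⁻¹ * θ = α + α⁻¹ := by
      rw [hθ, map_inv₀, ← mul_assoc, inv_mul_cancel₀ hck, one_mul]
    rwa [h3] at h2
  have hintT : IsIntegral (ZMod p)⟮θ⟯ α := IsIntegral.of_finite _ _
  have hdle : (minpoly (ZMod p)⟮θ⟯ α).natDegree ≤ 2 := by
    set t : (ZMod p)⟮θ⟯ := ⟨α + α⁻¹, hθ₀T⟩ with ht
    have hq : Polynomial.aeval α
        (C (1 : (ZMod p)⟮θ⟯) * X ^ 2 + C (-t) * X + C 1) = 0 := by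
      have hco : (algebraMap (ZMod p)⟮θ⟯ (GaloisField p n)) t = α + α⁻¹ := rfl
      simp only [map_add, map_mul, aeval_C, aeval_X, map_pow, map_one, map_neg, hco]
      field_simp
      ring
    have hdq : (C (1 : (ZMod p)⟮θ⟯) * X ^ 2 + C (-t) * X + C 1).degree = 2 :=
      Polynomial.degree_quadratic one_ne_zero
    have hq0 : (C (1 : (ZMod p)⟮θ⟯) * X ^ 2 + C (-t) * X + C 1) ≠ 0 := by
      intro h
      rw [h] at hdq
      simp at hdq
    have hle := minpoly.degree_le_of_ne_zero (ZMod p)⟮θ⟯ α hq0 hq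
    rw [hdq] at hle
    exact Polynomial.natDegree_le_iff_degree_le.2 hle
  have htopTα : ((ZMod p)⟮θ⟯)⟮α⟯ = ⊤ := by
    rw [eq_top_iff]
    intro x _
    have hle : IntermediateField.adjoin (ZMod p) {α} ≤
        (((ZMod p)⟮θ⟯)⟮α⟯).restrictScalars (ZMod p) :=
      IntermediateField.adjoin_le_iff.2 (by
        intro y hy
        rw [Set.mem_singleton_iff] at hy
        subst hy
        rw [SetLike.mem_coe, IntermediateField.mem_restrictScalars]
        exact IntermediateField.subset_adjoin _ _ rfl)
    have hx : x ∈ IntermediateField.adjoin (ZMod p) {α} := by rw [htopα]; trivial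
    exact hle hx
  have hrel : finrank (ZMod p)⟮θ⟯ (GaloisField p n) ≤ 2 := by
    have h1 : finrank (ZMod p)⟮θ⟯ ((ZMod p)⟮θ⟯)⟮α⟯ = (minpoly (ZMod p)⟮θ⟯ α).natDegree :=
      IntermediateField.adjoin.finrank hintT
    have h2 : finrank (ZMod p)⟮θ⟯ (GaloisField p n) =
        finrank (ZMod p)⟮θ⟯ ((ZMod p)⟮θ⟯)⟮α⟯ := by
      rw [htopTα, IntermediateField.finrank_top']
    omega
  have hrelpos : 0 < finrank (ZMod p)⟮θ⟯ (GaloisField p n) := finrank_pos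
  have htower : finrank (ZMod p) (ZMod p)⟮θ⟯ * finrank (ZMod p)⟮θ⟯ (GaloisField p n) =
      finrank (ZMod p) (GaloisField p n) :=
    finrank_mul_finrank _ _ _
  have hrelne1 : finrank (ZMod p)⟮θ⟯ (GaloisField p n) ≠ 1 := by
    intro h1
    rw [h1, mul_one, hfr] at htower
    have hTsub : Subalgebra.toSubmodule ((ZMod p)⟮θ⟯).toSubalgebra = ⊤ := by
      apply Submodule.eq_top_of_finrank_eq
      rw [hfr]; exact htower
    have hαT : α ∈ (ZMod p)⟮θ⟯ := by
      have : α ∈ Subalgebra.toSubmodule ((ZMod p)⟮θ⟯).toSubalgebra := by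
        rw [hTsub]; trivial
      exact this
    have hTE : ∀ x ∈ (ZMod p)⟮θ⟯, σ x = x := by
      intro x hx
      have hle : (ZMod p)⟮θ⟯ ≤ (AlgHom.equalizer σ
          (AlgHom.id (ZMod p) (GaloisField p n))).toIntermediateField (fun y hy => by
            have hy' : σ y = y := hy
            show σ y⁻¹ = y⁻¹
            rw [map_inv₀, hy']) :=
        IntermediateField.adjoin_le_iff.2 (by
          intro y hy
          rw [Set.mem_singleton_iff] at hy
          subst hy
          exact hσθ)
      exact hle hx
    have hfix : σ α = α := hTE α hαT
    rw [hσα] at hfix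
    apply hα2
    nth_rewrite 1 [← hfix]
    exact inv_mul_cancel₀ hα0
  have hrel2 : finrank (ZMod p)⟮θ⟯ (GaloisField p n) = 2 := by omega
  rw [hrel2, hfr] at htower
  have hθint : IsIntegral (ZMod p) θ := IsIntegral.of_finite _ _
  have hminθ : (minpoly (ZMod p) θ).natDegree = finrank (ZMod p) (ZMod p)⟮θ⟯ :=
    (IntermediateField.adjoin.finrank hθint).symm
  exact ⟨⟨finrank (ZMod p) (ZMod p)⟮θ⟯, by omega⟩, by omega⟩
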